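/- arXiv:2605.15346 — 3 statements merged into one kernel-verified Lean document; each statement's English description precedes it below -/
import Mathlib

section
/- Let $u : \Omega \to \mathbb{R}$ be measurable and locally essentially bounded from below on an open set $\Omega \subset \mathbb{R}^N$, and suppose $u \in L^1_{loc}(\Omega)$. Suppose $u$ satisfies the following property (D): there exist constants $a, b \in (0,1)$ such that for every $K > 0$, every ball $B_\gamma(y) \subset \Omega$ with $\gamma \in (0,1]$, and every $\beta_- \le \operatorname{ess\,inf}_{B_\gamma(y)} u$, there exists $\rho \in (0,1)$ (independent of $\gamma$) such that $|\{u \le \beta_- + K\} \cap B_\gamma(y)| \le \rho |B_\gamma(y)|$ implies $u \ge \beta_- + aK$ a.e. in $B_{b\gamma}(y)$. Then $u(x) = u_*(x)$ for every Lebesgue point $x$ of $u$, where $u_*(x) = \lim_{r \to 0} \operatorname{ess\,inf}_{B_r(x)} u$. In particular, $u_*$ is a lower semicontinuous representative of $u$ in $\Omega$. -/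
open MeasureTheory Metric Set Filter

set_option maxHeartbeats 1000000

private lemma aux_bddAbove {α : Type*} [MeasurableSpace α] {μ : Measure α} (hμ : μ ≠ 0)
    (u : α → ℝ) : BddAbove {c : ℝ | μ {x | u x < c} = 0} := by
  obtain ⟨n, hn⟩ : ∃ n : ℕ, μ {x | u x < (n : ℝ)} ≠ 0 := by
    by_contra hc
    push_neg at hc
    have h0 : μ (⋃ n : ℕ, {x | u x < (n : ℝ)}) = 0 := measure_iUnion_null hc
    have huniv : (⋃ n : ℕ, {x | u x < (n : ℝ)}) = univ := by
      ext y
      simpa using exists_nat_gt (u y)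
    rw [huniv] at h0
    exact hμ (Measure.measure_univ_eq_zero.mp h0)
  refine ⟨n, fun c hc => ?_⟩
  by_contra hnc
  push_neg at hnc
  exact hn (measure_mono_null (fun y hy => lt_trans hy hnc) hc)

private lemma aux_le_essInf {α : Type*} [MeasurableSpace α] {μ : Measure α} (hμ : μ ≠ 0)
    {u : α → ℝ} {c : ℝ} (h : ∀ᵐ y ∂μ, c ≤ u y) : c ≤ essInf u μ := by
  rw [essInf_eq_sSup]
  refine le_csSup (aux_bddAbove hμ u) ?_
  rw [ae_iff] at h
  simpa [not_le] using h

private lemma aux_essInf_mono {α : Type*} [MeasurableSpace α] {μ ν : Measure α}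
    (hle : μ ≤ ν) (hμ : μ ≠ 0) {u : α → ℝ} {c : ℝ} (hc : ∀ᵐ y ∂ν, c ≤ u y) :
    essInf u ν ≤ essInf u μ := by
  rw [essInf_eq_sSup, essInf_eq_sSup]
  refine csSup_le_csSup (aux_bddAbove hμ u) ⟨c, ?_⟩ ?_
  · rw [ae_iff] at hc
    simpa [not_le] using hc
  · intro d hd
    exact le_antisymm (le_trans (hle _) hd.le) zero_le

/-- Lower semicontinuity at Lebesgue points (Liao): if `u` is measurable, locally integrable
and locally essentially bounded below on an open set `Ω`, and satisfies the De Giorgi-type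
property (D), then at every Lebesgue point `x ∈ Ω` of `u` one has
`u(x) = u_*(x) := lim_{r→0} essinf_{B_r(x)} u`. -/
theorem stmt12 (N : ℕ) (Ω : Set (EuclideanSpace ℝ (Fin N))) (hΩ : IsOpen Ω)
    (u : EuclideanSpace ℝ (Fin N) → ℝ) (hmeas : Measurable u)
    (hloc : LocallyIntegrableOn u Ω volume)
    (hbdd : ∀ x ∈ Ω, ∃ r > (0:ℝ), ball x r ⊆ Ω ∧
      ∃ M : ℝ, ∀ᵐ y ∂(volume.restrict (ball x r)), M ≤ u y)
    (a b : ℝ) (ha : a ∈ Set.Ioo (0:ℝ) 1) (hb : b ∈ Set.Ioo (0:ℝ) 1)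
    (hD : ∀ K > (0:ℝ), ∀ β : ℝ, ∃ ρ ∈ Set.Ioo (0:ℝ) 1,
      ∀ (y : EuclideanSpace ℝ (Fin N)) (γ : ℝ), γ ∈ Set.Ioc (0:ℝ) 1 → ball y γ ⊆ Ω →
        β ≤ essInf u (volume.restrict (ball y γ)) →
        volume {z ∈ ball y γ | u z ≤ β + K} ≤ ENNReal.ofReal ρ * volume (ball y γ) →
        ∀ᵐ z ∂(volume.restrict (ball y (b * γ))), β + a * K ≤ u z)
    (x : EuclideanSpace ℝ (Fin N)) (hx : x ∈ Ω)
    (hleb : Tendsto (fun r : ℝ => ⨍ y in ball x r, |u x - u y|)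
      (nhdsWithin 0 (Set.Ioi 0)) (nhds 0)) :
    Tendsto (fun r : ℝ => essInf u (volume.restrict (ball x r)))
      (nhdsWithin 0 (Set.Ioi 0)) (nhds (u x)) := by
  obtain ⟨ha0, ha1⟩ := ha
  obtain ⟨hb0, hb1⟩ := hb
  obtain ⟨r₀, hr₀, hr₀Ω, M, hM⟩ := hbdd x hx
  set m : ℝ → ℝ := fun r => essInf u (volume.restrict (ball x r)) with hmdef
  have hball_ne : ∀ r : ℝ, 0 < r → volume.restrict (ball x r) ≠ 0 := by
    intro r hr h0
    rw [Measure.restrict_eq_zero] at h0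
    exact (measure_ball_pos volume x hr).ne' h0
  have hMr : ∀ r : ℝ, 0 < r → r ≤ r₀ →
      ∀ᵐ y ∂(volume.restrict (ball x r)), M ≤ u y := fun r _ h2 =>
    ae_restrict_of_ae_restrict_of_subset (ball_subset_ball h2) hM
  have hmono : ∀ r s : ℝ, 0 < r → r ≤ s → s ≤ r₀ → m s ≤ m r := by
    intro r s h0 hrs hs
    exact aux_essInf_mono (Measure.restrict_mono (ball_subset_ball hrs) le_rfl)
      (hball_ne r h0) (hMr s (h0.trans_le hrs) hs)
  have hVpos : ∀ r : ℝ, 0 < r → 0 < (volume (ball x r)).toReal := fun r h =>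
    ENNReal.toReal_pos (measure_ball_pos volume x h).ne' measure_ball_lt_top.ne
  have hint : ∀ r : ℝ, 0 < r → r < r₀ → IntegrableOn u (ball x r) volume := by
    intro r h0 hr
    exact (hloc.integrableOn_compact_subset
      ((closedBall_subset_ball hr).trans hr₀Ω) (isCompact_closedBall x r)).mono_set
      ball_subset_closedBall
  have hgint : ∀ r : ℝ, 0 < r → r < r₀ →
      IntegrableOn (fun y => |u x - u y|) (ball x r) volume := by
    intro r h0 hr
    exact ((integrableOn_const measure_ball_lt_top.ne).sub (hint r h0 hr)).abs
  -- key upper-bound computation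
  have key : ∀ ε : ℝ, 0 < ε → ∀ r : ℝ, 0 < r → r < r₀ →
      (⨍ y in ball x r, |u x - u y|) < ε → m r ≤ u x + ε := by
    intro ε hε r h0 hr havg
    set V := (volume (ball x r)).toReal with hV
    have hVp : 0 < V := hVpos r h0
    have hIu := hint r h0 hr
    have hIg := hgint r h0 hr
    have hIc : ∀ c : ℝ, IntegrableOn (fun _ => c) (ball x r) volume := fun c =>
      integrableOn_const measure_ball_lt_top.ne
    have h1 : ∀ᵐ y ∂(volume.restrict (ball x r)), m r ≤ u y :=
      ae_essInf_le ⟨M, eventually_map.mpr ((hMr r h0 hr.le).mono fun y hy => hy)⟩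
    have h2 : m r * V ≤ ∫ y in ball x r, u y := by
      have h := integral_mono_ae (hIc (m r)) hIu h1
      rwa [integral_const, measureReal_restrict_apply_univ, smul_eq_mul, mul_comm] at h
    have h3 : (∫ y in ball x r, u y) ≤ u x * V + ∫ y in ball x r, |u x - u y| := by
      have hpt : ∀ y, u y ≤ u x + |u x - u y| := by
        intro y
        have h1' := le_abs_self (u y - u x)
        have h2' := abs_sub_comm (u y) (u x)
        linarith
      have h := integral_mono_ae hIu ((hIc (u x)).add hIg) (ae_of_all _ hpt)
      simp only [Pi.add_apply] at h
      rwa [integral_add (hIc (u x)) hIg, integral_const, measureReal_restrict_apply_univ,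
        smul_eq_mul, mul_comm] at h
    have h4 : (∫ y in ball x r, |u x - u y|) = V * ⨍ y in ball x r, |u x - u y| := by
      rw [setAverage_eq, smul_eq_mul, measureReal_def, ← hV]
      field_simp
    nlinarith [havg, hVp, h2, h3, h4]
  have step2 : ∀ ε : ℝ, 0 < ε → ∀ᶠ r in nhdsWithin (0:ℝ) (Set.Ioi 0), m r ≤ u x + ε := by
    intro ε hε
    filter_upwards [hleb.eventually_lt_const hε, Ioo_mem_nhdsGT hr₀]
      with r havg hrmem
    exact key ε hε r hrmem.1 hrmem.2 havg
  obtain ⟨δ', hδ'pos, hδ'sub⟩ :=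
    mem_nhdsGT_iff_exists_Ioc_subset.mp (step2 1 one_pos)
  set δ₁ : ℝ := min δ' (min (r₀ / 2) 1) with hδ₁def
  have hδ₁pos : 0 < δ₁ := lt_min hδ'pos (lt_min (half_pos hr₀) one_pos)
  have hδ₁r₀ : δ₁ < r₀ :=
    lt_of_le_of_lt ((min_le_right _ _).trans (min_le_left _ _)) (half_lt_self hr₀)
  have hδ₁1 : δ₁ ≤ 1 := (min_le_right _ _).trans (min_le_right _ _)
  have hbound : ∀ r ∈ Ioc (0:ℝ) δ₁, m r ≤ u x + 1 := fun r hr =>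
    hδ'sub ⟨hr.1, hr.2.trans (min_le_left _ _)⟩
  set S : Set ℝ := m '' Ioc 0 δ₁ with hSdef
  have hSne : S.Nonempty := ⟨m δ₁, ⟨δ₁, ⟨hδ₁pos, le_rfl⟩, rfl⟩⟩
  have hSbdd : BddAbove S := by
    refine ⟨u x + 1, ?_⟩
    rintro y ⟨r, hr, rfl⟩
    exact hbound r hr
  set L : ℝ := sSup S with hLdef
  have hub : ∀ r ∈ Ioc (0:ℝ) δ₁, m r ≤ L := fun r hr => le_csSup hSbdd ⟨r, hr, rfl⟩
  have hLle : L ≤ u x := by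
    by_contra hcon
    push_neg at hcon
    set ε : ℝ := (L - u x) / 2 with hεdef
    have hε : 0 < ε := by rw [hεdef]; linarith
    obtain ⟨δ, hδpos, hδsub⟩ :=
      mem_nhdsGT_iff_exists_Ioc_subset.mp (step2 ε hε)
    set δ₂ : ℝ := min δ δ₁ with hδ₂def
    have hδ₂pos : 0 < δ₂ := lt_min hδpos hδ₁pos
    have hall : ∀ y ∈ S, y ≤ u x + ε := by
      rintro y ⟨r, hr, rfl⟩
      rcases le_or_gt r δ₂ with h | h
      · exact hδsub ⟨hr.1, h.trans (min_le_left _ _)⟩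
      · calc m r ≤ m δ₂ := hmono δ₂ r hδ₂pos h.le (hr.2.trans hδ₁r₀.le)
          _ ≤ u x + ε := hδsub ⟨hδ₂pos, min_le_left _ _⟩
    have hL' : L ≤ u x + ε := csSup_le hSne hall
    rw [hεdef] at hL'
    linarith
  have hLge : u x ≤ L := by
    by_contra hcon
    push_neg at hcon
    set K : ℝ := (u x - L) / 2 with hKdef
    have hK : 0 < K := by rw [hKdef]; linarith
    set β : ℝ := L - a * K / 2 with hβdef
    obtain ⟨ρ, ⟨hρ0, hρ1⟩, hP⟩ := hD K hK β
    obtain ⟨y0, hy0S, hy0⟩ := exists_lt_of_lt_csSup hSne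
      (show L - a * K / 2 < L by nlinarith)
    obtain ⟨r₁, hr₁mem, rfl⟩ := hy0S
    have hev : ∀ᶠ γ in nhdsWithin (0:ℝ) (Set.Ioi 0),
        (⨍ y in ball x γ, |u x - u y|) < ρ * K :=
      hleb.eventually_lt_const (by positivity)
    have hev2 : ∀ᶠ γ in nhdsWithin (0:ℝ) (Set.Ioi 0), γ ∈ Ioc (0:ℝ) r₁ :=
      eventually_of_mem (Ioc_mem_nhdsGT hr₁mem.1) fun z hz => hz
    obtain ⟨γ, havg, hγ0, hγr₁⟩ := (hev.and hev2).exists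
    have hγδ₁ : γ ≤ δ₁ := hγr₁.trans hr₁mem.2
    have hγ1 : γ ≤ 1 := hγδ₁.trans hδ₁1
    have hγr₀ : γ < r₀ := lt_of_le_of_lt hγδ₁ hδ₁r₀
    have hβγ : β ≤ m γ := by
      have h := hmono γ r₁ hγ0 hγr₁ (hr₁mem.2.trans hδ₁r₀.le)
      rw [hβdef]
      linarith
    have hKux : K ≤ u x - (β + K) := by
      rw [hβdef, hKdef]
      nlinarith [mul_nonneg ha0.le hK.le]
    have hmark : volume {z ∈ ball x γ | u z ≤ β + K} ≤
        ENNReal.ofReal ρ * volume (ball x γ) := by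
      set V := (volume (ball x γ)).toReal with hV
      have hVp : 0 < V := hVpos γ hγ0
      have hIg := hgint γ hγ0 hγr₀
      have hgnn : 0 ≤ᵐ[volume.restrict (ball x γ)] fun y => |u x - u y| :=
        ae_of_all _ fun y => abs_nonneg _
      have hlin : ENNReal.ofReal (∫ y in ball x γ, |u x - u y|) =
          ∫⁻ y in ball x γ, ENNReal.ofReal |u x - u y| :=
        ofReal_integral_eq_lintegral_ofReal hIg hgnn
      have hsub : {z | u z ≤ β + K} ⊆
          {z | ENNReal.ofReal K ≤ ENNReal.ofReal |u x - u z|} := by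
        intro z hz
        simp only [mem_setOf_eq] at hz ⊢
        apply ENNReal.ofReal_le_ofReal
        have h1' : K ≤ u x - u z := by linarith
        exact h1'.trans (le_abs_self _)
      have hmeas_set : MeasurableSet {z | u z ≤ β + K} := hmeas measurableSet_Iic
      have hseteq : {z ∈ ball x γ | u z ≤ β + K} = {z | u z ≤ β + K} ∩ ball x γ := by
        ext z
        simp only [mem_sep_iff, mem_inter_iff, mem_setOf_eq]
        tauto
      rw [hseteq, ← Measure.restrict_apply hmeas_set]
      have hmarkov : ENNReal.ofReal K * (volume.restrict (ball x γ)) {z | u z ≤ β + K} ≤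
          ∫⁻ y in ball x γ, ENNReal.ofReal |u x - u y| := by
        calc ENNReal.ofReal K * (volume.restrict (ball x γ)) {z | u z ≤ β + K}
            ≤ ENNReal.ofReal K * (volume.restrict (ball x γ))
              {z | ENNReal.ofReal K ≤ ENNReal.ofReal |u x - u z|} := by
              gcongr
          _ ≤ _ := mul_meas_ge_le_lintegral₀
              ((measurable_const.sub hmeas).abs.ennreal_ofReal).aemeasurable _
      rw [← hlin] at hmarkov
      have hAV : (∫ y in ball x γ, |u x - u y|) ≤ V * (ρ * K) := by
        have h4 : (∫ y in ball x γ, |u x - u y|) = V * ⨍ y in ball x γ, |u x - u y| := by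
          rw [setAverage_eq, smul_eq_mul, measureReal_def, ← hV]
          field_simp
        rw [h4]
        nlinarith [havg.le, hVp.le]
      have hKne : ENNReal.ofReal K ≠ 0 := (ENNReal.ofReal_pos.mpr hK).ne'
      have hKtop : ENNReal.ofReal K ≠ ⊤ := ENNReal.ofReal_ne_top
      have hchain : ENNReal.ofReal K * (volume.restrict (ball x γ)) {z | u z ≤ β + K} ≤
          ENNReal.ofReal K * (ENNReal.ofReal ρ * volume (ball x γ)) := by
        refine hmarkov.trans ?_
        calc ENNReal.ofReal (∫ y in ball x γ, |u x - u y|)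
            ≤ ENNReal.ofReal (V * (ρ * K)) := ENNReal.ofReal_le_ofReal hAV
          _ = ENNReal.ofReal K * (ENNReal.ofReal ρ * ENNReal.ofReal V) := by
              rw [show V * (ρ * K) = K * (ρ * V) by ring, ENNReal.ofReal_mul hK.le,
                ENNReal.ofReal_mul hρ0.le]
          _ = ENNReal.ofReal K * (ENNReal.ofReal ρ * volume (ball x γ)) := by
              rw [hV, ENNReal.ofReal_toReal measure_ball_lt_top.ne]
      exact (ENNReal.mul_le_mul_iff_right hKne hKtop).mp hchain
    have hae := hP x γ ⟨hγ0, hγ1⟩ ((ball_subset_ball hγr₀.le).trans hr₀Ω) hβγ hmark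
    have hmbγ : β + a * K ≤ m (b * γ) :=
      aux_le_essInf (hball_ne _ (mul_pos hb0 hγ0)) hae
    have hbγδ₁ : b * γ ∈ Ioc (0:ℝ) δ₁ :=
      ⟨mul_pos hb0 hγ0, (mul_le_of_le_one_left hγ0.le hb1.le).trans hγδ₁⟩
    have hLbγ := hub _ hbγδ₁
    rw [hβdef] at hmbγ
    nlinarith [mul_pos ha0 hK]
  have hLux : L = u x := le_antisymm hLle hLge
  rw [show u x = L from hLux.symm]
  refine tendsto_order.2 ⟨?_, ?_⟩
  · intro c hc
    obtain ⟨y0, hy0S, hy0⟩ := exists_lt_of_lt_csSup hSne hc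
    obtain ⟨r₁, hr₁mem, rfl⟩ := hy0S
    filter_upwards [Ioc_mem_nhdsGT hr₁mem.1] with γ hγ
    exact hy0.trans_le (hmono γ r₁ hγ.1 hγ.2 (hr₁mem.2.trans hδ₁r₀.le))
  · intro c hc
    filter_upwards [Ioc_mem_nhdsGT hδ₁pos] with γ hγ
    exact (hub γ hγ).trans_lt hc
end

section
/- Let $A \subset B_r(x_0) \subset \mathbb{R}^N$ be a measurable set with $r \in (0,1]$ and $\delta' \in (0,1)$. Define $A_{\delta'} = \bigcup_{\gamma > 0} \{ B_{3\gamma}(x) \cap B_r(x_0) : x \in B_r(x_0), \ |A \cap B_{3\gamma}(x)| > \delta' |B_\gamma(x)| \}$. Then either $|A_{\delta'}| \ge \frac{C}{\delta'} |A|$ for a dimensional constant $C = C(N) \in (0,1]$, or $A_{\delta'} = B_r(x_0)$. -/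
open MeasureTheory Metric Set

/-- The Krylov–Safonov dilated set `A_{δ'}`: the union of the sets `B_{3γ}(x) ∩ B_r(x₀)`
over `x ∈ B_r(x₀)` and `γ > 0` such that `|A ∩ B_{3γ}(x)| > δ' |B_γ(x)|`. -/
def ksUnion (N : ℕ) (x₀ : EuclideanSpace ℝ (Fin N)) (r δ' : ℝ)
    (A : Set (EuclideanSpace ℝ (Fin N))) : Set (EuclideanSpace ℝ (Fin N)) :=
  ⋃ (x : EuclideanSpace ℝ (Fin N)) (_ : x ∈ ball x₀ r) (γ : ℝ) (_ : 0 < γ)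
    (_ : ENNReal.ofReal δ' * volume (ball x γ) < volume (A ∩ ball x (3 * γ))),
    ball x (3 * γ) ∩ ball x₀ r

variable {N : ℕ}

lemma ks_exists_small_ball (x₀ x : EuclideanSpace ℝ (Fin N)) {r γ : ℝ}
    (hx : x ∈ ball x₀ r) (hγ : 0 < γ) (hγr : γ ≤ 2 * r) :
    ∃ z, ball z (γ / 2) ⊆ ball x γ ∩ ball x₀ r := by
  have hd : dist x x₀ < r := mem_ball.1 hx
  by_cases hcase : dist x x₀ ≤ r - γ / 2
  · refine ⟨x, subset_inter (ball_subset_ball (by linarith)) (ball_subset_ball' ?_)⟩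
    linarith
  · push_neg at hcase
    have hrg : 0 ≤ r - γ / 2 := by linarith
    have hd0 : 0 < dist x x₀ := lt_of_le_of_lt hrg hcase
    set t : ℝ := (r - γ / 2) / dist x x₀ with ht
    have ht0 : 0 ≤ t := div_nonneg hrg hd0.le
    have ht1 : t ≤ 1 := by
      rw [div_le_one hd0]; linarith
    refine ⟨x₀ + t • (x - x₀), subset_inter (ball_subset_ball' ?_) (ball_subset_ball' ?_)⟩
    · have : dist (x₀ + t • (x - x₀)) x = (1 - t) * dist x x₀ := by
        rw [dist_eq_norm]
        have : x₀ + t • (x - x₀) - x = -((1 - t) • (x - x₀)) := by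
          module
        rw [this, norm_neg, norm_smul, Real.norm_eq_abs, abs_of_nonneg (by linarith),
          dist_eq_norm]
      rw [this]
      have : (1 - t) * dist x x₀ = dist x x₀ - (r - γ / 2) := by
        rw [sub_mul, one_mul, ht, div_mul_cancel₀ _ hd0.ne']
      rw [this]
      linarith
    · have : dist (x₀ + t • (x - x₀)) x₀ = t * dist x x₀ := by
        rw [dist_eq_norm]
        have : x₀ + t • (x - x₀) - x₀ = t • (x - x₀) := by module
        rw [this, norm_smul, Real.norm_eq_abs, abs_of_nonneg ht0, dist_eq_norm]
      rw [this, ht]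
      rw [div_mul_cancel₀ _ hd0.ne']
      linarith

lemma ks_volume_ball_two (x : EuclideanSpace ℝ (Fin N)) (γ : ℝ) :
    volume (ball x (2 * γ)) = ENNReal.ofReal (2 ^ N) * volume (ball x γ) := by
  rw [Measure.addHaar_ball_mul_of_pos volume x (by norm_num : (0:ℝ) < 2) γ,
    finrank_euclideanSpace_fin, Measure.addHaar_ball_center, Measure.addHaar_ball_center volume x]

lemma ks_volume_inter_ge (x₀ x : EuclideanSpace ℝ (Fin N)) {r γ : ℝ}
    (hx : x ∈ ball x₀ r) (hγ : 0 < γ) (hγr : γ ≤ 2 * r) :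
    volume (ball x γ) ≤ ENNReal.ofReal (2 ^ N) * volume (ball x γ ∩ ball x₀ r) := by
  obtain ⟨z, hz⟩ := ks_exists_small_ball x₀ x hx hγ hγr
  calc volume (ball x γ) = volume (ball z (2 * (γ / 2))) := by
        rw [show 2 * (γ / 2) = γ by ring, Measure.addHaar_ball_center,
          Measure.addHaar_ball_center volume z]
    _ = ENNReal.ofReal (2 ^ N) * volume (ball z (γ / 2)) := ks_volume_ball_two z _
    _ ≤ ENNReal.ofReal (2 ^ N) * volume (ball x γ ∩ ball x₀ r) := by
        exact mul_le_mul_right (measure_mono hz) _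

lemma ks_exists_stopping (hN : 0 < N) (x₀ y x : EuclideanSpace ℝ (Fin N)) {r δ' : ℝ}
    (hr : 0 < r) (hδ : δ' ∈ Set.Ioo (0:ℝ) 1) (A : Set (EuclideanSpace ℝ (Fin N)))
    (hAsub : A ⊆ ball x₀ r) (hy : y ∈ ball x₀ r) (hyn : y ∉ ksUnion N x₀ r δ' A)
    (hxA : x ∈ A)
    (hxd : Filter.Tendsto (fun ρ => volume (A ∩ closedBall x ρ) / volume (closedBall x ρ))
      (nhdsWithin 0 (Set.Ioi 0)) (nhds 1)) :
    ∃ γ', 0 < γ' ∧ γ' ≤ r ∧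
      ENNReal.ofReal δ' * volume (ball x γ') < volume (A ∩ ball x (3 * γ')) ∧
      volume (A ∩ ball x (3 * (2 * γ'))) ≤ ENNReal.ofReal δ' * volume (ball x (2 * γ')) := by
  haveI : Nonempty (Fin N) := ⟨⟨0, hN⟩⟩
  haveI : Nontrivial (EuclideanSpace ℝ (Fin N)) := inferInstance
  have hxball : x ∈ ball x₀ r := hAsub hxA
  set S : Set ℝ := {γ : ℝ | 0 < γ ∧
      ENNReal.ofReal δ' * volume (ball x γ) < volume (A ∩ ball x (3 * γ))} with hS
  -- S is nonempty
  have hSne : S.Nonempty := by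
    have hδ1 : ENNReal.ofReal δ' < 1 := ENNReal.ofReal_lt_one.2 hδ.2
    have hev : ∀ᶠ γ in nhdsWithin 0 (Set.Ioi 0),
        ENNReal.ofReal δ' < volume (A ∩ closedBall x γ) / volume (closedBall x γ) :=
      hxd.eventually (eventually_gt_nhds hδ1)
    obtain ⟨γ, hγlt, hγpos⟩ := (hev.and self_mem_nhdsWithin).exists
    refine ⟨γ, hγpos, ?_⟩
    have h1 : ENNReal.ofReal δ' * volume (closedBall x γ) < volume (A ∩ closedBall x γ) :=
      ENNReal.mul_lt_of_lt_div hγlt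
    have h2 : volume (A ∩ closedBall x γ) ≤ volume (A ∩ ball x (3 * γ)) := by
      refine measure_mono (inter_subset_inter_right _ ?_)
      exact closedBall_subset_ball (by linarith)
    rw [← Measure.addHaar_closedBall_eq_addHaar_ball]
    exact lt_of_lt_of_le h1 h2
  -- every element of S is < r
  have hSbdd : ∀ γ ∈ S, γ ≤ r := by
    intro γ hγS
    by_contra hcon
    push_neg at hcon
    apply hyn
    have hyx : y ∈ ball x (3 * γ) := by
      rw [mem_ball]
      calc dist y x ≤ dist y x₀ + dist x₀ x := dist_triangle _ _ _
        _ < r + r := add_lt_add (mem_ball.1 hy) (by rw [dist_comm]; exact mem_ball.1 hxball)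
        _ ≤ 3 * γ := by linarith
    simp only [ksUnion, mem_iUnion]
    exact ⟨x, hxball, γ, hγS.1, hγS.2, hyx, hy⟩
  have hbdd : BddAbove S := ⟨r, hSbdd⟩
  obtain ⟨γ₀, hγ₀⟩ := id hSne
  have hsup_pos : 0 < sSup S := lt_of_lt_of_le hγ₀.1 (le_csSup hbdd hγ₀)
  obtain ⟨γ', hγ'S, hγ'gt⟩ := exists_lt_of_lt_csSup hSne (half_lt_self hsup_pos)
  refine ⟨γ', hγ'S.1, hSbdd γ' hγ'S, hγ'S.2, ?_⟩
  have h2γ : ¬ (2 * γ' ∈ S) := by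
    intro h
    have : 2 * γ' ≤ sSup S := le_csSup hbdd h
    linarith
  rw [hS, mem_setOf_eq] at h2γ
  push_neg at h2γ
  exact h2γ (by linarith [hγ'S.1])

set_option maxHeartbeats 1000000 in
/-- Krylov–Safonov covering lemma: there is a dimensional constant `C = C(N) ∈ (0,1]` such
that for every measurable `A ⊆ B_r(x₀)` with `r ∈ (0,1]` and every `δ' ∈ (0,1)`, either
`|A_{δ'}| ≥ (C/δ')|A|` or `A_{δ'} = B_r(x₀)`. -/
theorem stmt13 (N : ℕ) :
    ∃ C ∈ Set.Ioc (0:ℝ) 1, ∀ (x₀ : EuclideanSpace ℝ (Fin N)) (r δ' : ℝ),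
      r ∈ Set.Ioc (0:ℝ) 1 → δ' ∈ Set.Ioo (0:ℝ) 1 →
      ∀ A : Set (EuclideanSpace ℝ (Fin N)), MeasurableSet A → A ⊆ ball x₀ r →
        ENNReal.ofReal (C / δ') * volume A ≤ volume (ksUnion N x₀ r δ' A) ∨
          ksUnion N x₀ r δ' A = ball x₀ r := by
  refine ⟨1 / 4 ^ N, ⟨by positivity, by
    rw [div_le_one (by positivity)]; exact one_le_pow₀ (by norm_num)⟩, ?_⟩
  intro x₀ r δ' hr hδ A hA hAsub
  have hks_sub : ksUnion N x₀ r δ' A ⊆ ball x₀ r := by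
    simp only [ksUnion]
    exact iUnion_subset fun x => iUnion_subset fun _ => iUnion_subset fun γ =>
      iUnion_subset fun _ => iUnion_subset fun _ => inter_subset_right
  by_cases hcov : ksUnion N x₀ r δ' A = ball x₀ r
  · exact Or.inr hcov
  left
  rcases eq_or_ne (volume A) 0 with hA0 | hA0
  · rw [hA0, mul_zero]; exact zero_le
  obtain ⟨y, hy, hyn⟩ := exists_of_ssubset (hks_sub.ssubset_of_ne hcov)
  -- the case N = 0 : the whole ball is covered, contradiction
  rcases Nat.eq_zero_or_pos N with hN0 | hN
  · exfalso
    subst hN0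
    haveI : Subsingleton (EuclideanSpace ℝ (Fin 0)) :=
      ⟨fun a b => by ext i; exact Fin.elim0 i⟩
    obtain ⟨a, ha⟩ := nonempty_of_measure_ne_zero hA0
    apply hyn
    have hball1 : (ball x₀ 1 : Set (EuclideanSpace ℝ (Fin 0))) = univ :=
      eq_univ_of_forall fun z => by
        rw [mem_ball, Subsingleton.elim z x₀, dist_self]; norm_num
    have hball3 : (ball x₀ (3 * 1) : Set (EuclideanSpace ℝ (Fin 0))) = univ :=
      eq_univ_of_forall fun z => by
        rw [mem_ball, Subsingleton.elim z x₀, dist_self]; norm_num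
    have hAuniv : A = univ := eq_univ_of_forall fun z => (Subsingleton.elim a z) ▸ ha
    have hx₀ : x₀ ∈ ball x₀ r := by rw [mem_ball, dist_self]; exact hr.1
    simp only [ksUnion, mem_iUnion]
    refine ⟨x₀, hx₀, 1, one_pos, ?_, ?_⟩
    · rw [hball1, hball3, hAuniv, univ_inter]
      have hv0 : volume (univ : Set (EuclideanSpace ℝ (Fin 0))) ≠ 0 := by
        rw [← hball1]; exact (measure_ball_pos volume x₀ one_pos).ne'
      have hvtop : volume (univ : Set (EuclideanSpace ℝ (Fin 0))) ≠ ⊤ := by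
        have : (univ : Set (EuclideanSpace ℝ (Fin 0))) ⊆ closedBall x₀ 1 :=
          fun z _ => by rw [mem_closedBall, Subsingleton.elim z x₀, dist_self]; norm_num
        exact ((measure_mono this).trans_lt measure_closedBall_lt_top).ne
      calc ENNReal.ofReal δ' * volume (univ : Set (EuclideanSpace ℝ (Fin 0)))
          < 1 * volume (univ : Set (EuclideanSpace ℝ (Fin 0))) := by
            exact ENNReal.mul_lt_mul_left hv0 hvtop (ENNReal.ofReal_lt_one.2 hδ.2)
        _ = volume (univ : Set (EuclideanSpace ℝ (Fin 0))) := one_mul _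
    · rw [hball3]; exact ⟨mem_univ y, hy⟩
  -- main case N > 0
  haveI : Nonempty (Fin N) := ⟨⟨0, hN⟩⟩
  haveI : Nontrivial (EuclideanSpace ℝ (Fin N)) := inferInstance
  have hae := Besicovitch.ae_tendsto_measure_inter_div_of_measurableSet volume hA
  set G : Set (EuclideanSpace ℝ (Fin N)) := {x | Filter.Tendsto
      (fun ρ => volume (A ∩ closedBall x ρ) / volume (closedBall x ρ))
      (nhdsWithin 0 (Set.Ioi 0)) (nhds (A.indicator 1 x))} with hG
  have hGc : volume Gᶜ = 0 := by
    rw [hG, compl_setOf]; exact ae_iff.1 hae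
  have hsel : ∀ x : EuclideanSpace ℝ (Fin N), ∃ γ', x ∈ A ∩ G → (0 < γ' ∧ γ' ≤ r ∧
      ENNReal.ofReal δ' * volume (ball x γ') < volume (A ∩ ball x (3 * γ')) ∧
      volume (A ∩ ball x (3 * (2 * γ'))) ≤ ENNReal.ofReal δ' * volume (ball x (2 * γ'))) := by
    intro x
    by_cases hx : x ∈ A ∩ G
    · have hxd := hx.2
      rw [hG, mem_setOf_eq, indicator_of_mem hx.1] at hxd
      obtain ⟨γ', h1, h2, h3, h4⟩ := ks_exists_stopping hN x₀ y x hr.1 hδ A hAsub hy hyn hx.1 hxd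
      exact ⟨γ', fun _ => ⟨h1, h2, h3, h4⟩⟩
    · exact ⟨1, fun h => absurd h hx⟩
  choose g hg using hsel
  obtain ⟨u, huAG, hdisj, hcov'⟩ :=
    Vitali.exists_disjoint_subfamily_covering_enlargement_closedBall (A ∩ G) id g r
      (fun a ha => (hg a ha).2.1) 5 (by norm_num)
  have hu_cnt : u.Countable := by
    refine hdisj.countable_of_nonempty_interior fun i hi => ?_
    refine ⟨i, ?_⟩
    have := (hg i (huAG hi)).1
    exact ball_subset_interior_closedBall (mem_ball_self this)
  have hdisj' : u.PairwiseDisjoint (fun b => ball b (g b) ∩ ball x₀ r) := by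
    refine hdisj.mono fun b => ?_
    exact inter_subset_left.trans ball_subset_closedBall
  have key : volume A ≤ ENNReal.ofReal (δ' * 2 ^ N * 2 ^ N) * volume (ksUnion N x₀ r δ' A) := by
    calc volume A ≤ volume (A ∩ G) + volume (A \ G) := measure_le_inter_add_diff _ _ _
      _ = volume (A ∩ G) := by
          rw [measure_mono_null (diff_subset_compl A G) hGc, add_zero]
      _ ≤ volume (⋃ b ∈ u, A ∩ closedBall b (5 * g b)) := by
          refine measure_mono fun a ha => ?_
          obtain ⟨b, hb, hsub⟩ := hcov' a ha
          exact mem_biUnion hb ⟨ha.1, hsub (mem_closedBall_self (hg a ha).1.le)⟩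
      _ ≤ ∑' b : u, volume (A ∩ closedBall b (5 * g b)) := measure_biUnion_le volume hu_cnt _
      _ ≤ ∑' b : u, ENNReal.ofReal (δ' * 2 ^ N * 2 ^ N) *
            volume (ball (b : EuclideanSpace ℝ (Fin N)) (g b) ∩ ball x₀ r) := by
          refine ENNReal.tsum_le_tsum fun b => ?_
          obtain ⟨hb1, hb2, hb3, hb4⟩ := hg b (huAG b.2)
          have hbA : (b : EuclideanSpace ℝ (Fin N)) ∈ A := (huAG b.2).1
          have hbball : (b : EuclideanSpace ℝ (Fin N)) ∈ ball x₀ r := hAsub hbA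
          calc volume (A ∩ closedBall (b : EuclideanSpace ℝ (Fin N)) (5 * g b))
              ≤ volume (A ∩ ball (b : EuclideanSpace ℝ (Fin N)) (3 * (2 * g b))) := by
                refine measure_mono (inter_subset_inter_right _ ?_)
                exact closedBall_subset_ball (by linarith)
            _ ≤ ENNReal.ofReal δ' * volume (ball (b : EuclideanSpace ℝ (Fin N)) (2 * g b)) := hb4
            _ = ENNReal.ofReal δ' * (ENNReal.ofReal (2 ^ N) * volume (ball (b : EuclideanSpace ℝ (Fin N)) (g b))) := by
                rw [ks_volume_ball_two]
            _ ≤ ENNReal.ofReal δ' * (ENNReal.ofReal (2 ^ N) * (ENNReal.ofReal (2 ^ N) *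
                  volume (ball (b : EuclideanSpace ℝ (Fin N)) (g b) ∩ ball x₀ r))) := by
                refine mul_le_mul_right (mul_le_mul_right ?_ _) _
                exact ks_volume_inter_ge x₀ (b : EuclideanSpace ℝ (Fin N)) hbball hb1 (by linarith [hr.1])
            _ = ENNReal.ofReal (δ' * 2 ^ N * 2 ^ N) *
                  volume (ball (b : EuclideanSpace ℝ (Fin N)) (g b) ∩ ball x₀ r) := by
                rw [ENNReal.ofReal_mul (mul_nonneg hδ.1.le (by positivity)),
                  ENNReal.ofReal_mul hδ.1.le, mul_assoc, mul_assoc]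
      _ = ENNReal.ofReal (δ' * 2 ^ N * 2 ^ N) *
            ∑' b : u, volume (ball (b : EuclideanSpace ℝ (Fin N)) (g b) ∩ ball x₀ r) := ENNReal.tsum_mul_left
      _ = ENNReal.ofReal (δ' * 2 ^ N * 2 ^ N) *
            volume (⋃ b ∈ u, ball b (g b) ∩ ball x₀ r) := by
          rw [measure_biUnion hu_cnt hdisj'
            (fun b _ => (isOpen_ball.inter isOpen_ball).measurableSet)]
      _ ≤ ENNReal.ofReal (δ' * 2 ^ N * 2 ^ N) * volume (ksUnion N x₀ r δ' A) := by
          refine mul_le_mul_right (measure_mono ?_) _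
          refine iUnion₂_subset fun b hb => ?_
          obtain ⟨hb1, hb2, hb3, hb4⟩ := hg b (huAG hb)
          intro z hz
          simp only [ksUnion, mem_iUnion]
          exact ⟨b, hAsub (huAG hb).1, g b, hb1, hb3,
            ball_subset_ball (by linarith) hz.1, hz.2⟩
  calc ENNReal.ofReal (1 / 4 ^ N / δ') * volume A
      ≤ ENNReal.ofReal (1 / 4 ^ N / δ') *
          (ENNReal.ofReal (δ' * 2 ^ N * 2 ^ N) * volume (ksUnion N x₀ r δ' A)) :=
        mul_le_mul_right key _
    _ = ENNReal.ofReal (1 / 4 ^ N / δ' * (δ' * 2 ^ N * 2 ^ N)) *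
          volume (ksUnion N x₀ r δ' A) := by
        rw [← mul_assoc, ← ENNReal.ofReal_mul (div_nonneg (by positivity) hδ.1.le)]
    _ = volume (ksUnion N x₀ r δ' A) := by
        have : 1 / 4 ^ N / δ' * (δ' * 2 ^ N * 2 ^ N) = 1 := by
          rw [show (4:ℝ) = 2 * 2 by norm_num, mul_pow]
          field_simp [hδ.1.ne']
        rw [this, ENNReal.ofReal_one, one_mul]
end

section
/- Let $u : \mathbb{R}^N \to \mathbb{R}$ and let $u_m = \min\{ m\, u_+, 1 \}$ for $m \in \mathbb{N}$, where $u_+ = \max\{u, 0\}$. Let $p > 1$ and let $v : \mathbb{R}^N \to [0,\infty)$. Then for all $x, y \in \mathbb{R}^N$, $|u(x) - u(y)|^{p-2} (u(x) - u(y)) \big( u_m(x) v(x) - u_m(y) v(y) \big) \ge (u_+(x) - u_+(y)) |u_+(x) - u_+(y)|^{p-2} \, u_m(x) \big( v(x) - v(y) \big)$ whenever $u(x) \ge u(y)$. -/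
/-- Pointwise inequality behind "the positive part of a subsolution is a subsolution":
with `u₊ = max{u,0}`, `u_m = min{m u₊, 1}`, `v ≥ 0`, and `u(x) ≥ u(y)`,
`|u(x)-u(y)|^{p-2}(u(x)-u(y))(u_m(x)v(x) - u_m(y)v(y))
  ≥ (u₊(x)-u₊(y))|u₊(x)-u₊(y)|^{p-2} u_m(x)(v(x)-v(y))`. -/
theorem stmt16 (N : ℕ) (p : ℝ) (hp : 1 < p) (u : EuclideanSpace ℝ (Fin N) → ℝ)
    (m : ℕ) (hm : 1 ≤ m) (v : EuclideanSpace ℝ (Fin N) → ℝ) (hv : ∀ z, 0 ≤ v z)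
    (x y : EuclideanSpace ℝ (Fin N)) (hxy : u y ≤ u x) :
    (max (u x) 0 - max (u y) 0) * |max (u x) 0 - max (u y) 0| ^ (p - 2)
        * min ((m : ℝ) * max (u x) 0) 1 * (v x - v y)
      ≤ |u x - u y| ^ (p - 2) * (u x - u y)
        * (min ((m : ℝ) * max (u x) 0) 1 * v x - min ((m : ℝ) * max (u y) 0) 1 * v y) := by
  have hp1 : (0:ℝ) < p - 1 := by linarith
  have key : ∀ r : ℝ, 0 ≤ r → r * |r| ^ (p-2) = r ^ (p-1) := by
    intro r hr
    rcases hr.eq_or_lt with h|h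
    · rw [← h, zero_mul, Real.zero_rpow (by linarith : p - 1 ≠ 0)]
    · rw [abs_of_pos h, show p - 1 = (p-2) + 1 by ring, Real.rpow_add_one h.ne']
      ring
  set a := u x with ha
  set b := u y with hb
  have hax : (0:ℝ) ≤ max a 0 := le_max_right _ _
  have hbx : (0:ℝ) ≤ max b 0 := le_max_right _ _
  have hba : max b 0 ≤ max a 0 := max_le_max hxy le_rfl
  have hd0 : (0:ℝ) ≤ max a 0 - max b 0 := by linarith
  have hc0 : (0:ℝ) ≤ a - b := by linarith
  have hdc : max a 0 - max b 0 ≤ a - b := by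
    rcases le_total a 0 with h1|h1 <;> rcases le_total b 0 with h2|h2 <;>
      simp [max_eq_left, max_eq_right, h1, h2] <;> linarith
  have hK1 := key _ hd0
  have hK2 := key _ hc0
  rw [show (max a 0 - max b 0) * |max a 0 - max b 0| ^ (p - 2)
        * min ((m : ℝ) * max a 0) 1 * (v x - v y)
      = ((max a 0 - max b 0) * |max a 0 - max b 0| ^ (p - 2))
        * (min ((m : ℝ) * max a 0) 1 * (v x - v y)) by ring,
     show |a - b| ^ (p - 2) * (a - b) = (a - b) * |a - b| ^ (p - 2) by ring,
     hK1, hK2]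
  have hmono : (max a 0 - max b 0) ^ (p-1) ≤ (a - b) ^ (p-1) :=
    Real.rpow_le_rpow hd0 hdc hp1.le
  have hs0 : (0:ℝ) ≤ min ((m : ℝ) * max a 0) 1 :=
    le_min (mul_nonneg (Nat.cast_nonneg m) hax) zero_le_one
  have ht0 : (0:ℝ) ≤ min ((m : ℝ) * max b 0) 1 :=
    le_min (mul_nonneg (Nat.cast_nonneg m) hbx) zero_le_one
  have hts : min ((m : ℝ) * max b 0) 1 ≤ min ((m : ℝ) * max a 0) 1 :=
    min_le_min (mul_le_mul_of_nonneg_left hba (Nat.cast_nonneg m)) le_rfl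
  have hd1 : (0:ℝ) ≤ (max a 0 - max b 0) ^ (p-1) := Real.rpow_nonneg hd0 _
  have hc1 : (0:ℝ) ≤ (a - b) ^ (p-1) := Real.rpow_nonneg hc0 _
  by_cases hby : b ≤ 0
  · have hbz : max b 0 = 0 := max_eq_right hby
    rw [hbz] at hmono hd1 ⊢
    have ht : min ((m : ℝ) * (0:ℝ)) 1 = 0 := by norm_num
    rw [ht]
    simp only [sub_zero] at hmono hd1 ⊢
    have hvx := hv x
    have hvy := hv y
    nlinarith [mul_nonneg (mul_nonneg hd1 hs0) hvy,
      mul_nonneg (mul_nonneg (sub_nonneg.mpr hmono) hs0) hvx]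
  · push_neg at hby
    have h1 : max a 0 = a := max_eq_left (by linarith)
    have h2 : max b 0 = b := max_eq_left hby.le
    simp only [h1, h2] at hmono hts ⊢
    have hvy := hv y
    nlinarith [mul_nonneg (mul_nonneg hc1 (sub_nonneg.mpr hts)) hvy]
end
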